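/- Let M = (M_i)_{i∈I} be a POVM on ℂ^d with every M_i ≠ 0, and let ρ, σ be quantum states with (1/2)‖ρ − σ‖₁ ≤ ε ≤ 1. Then |S_M(ρ) − S_M(σ)| ≤ h(ε) + ε·log|I| + ε·max_i |log tr(M_i)|. -/

import Mathlib

open scoped BigOperators ComplexOrder Classical

noncomputable section

/-- Shannon entropy of a finitely supported distribution, with `0 log 0 = 0`. -/
def shannonEntropy {ι : Type*} [Fintype ι] (p : ι → ℝ) : ℝ :=
  -∑ i, p i * Real.log (p i)

/-- A quantum state: positive semidefinite with unit trace. -/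
def IsState {n : Type*} [Fintype n] (ρ : Matrix n n ℂ) : Prop :=
  ρ.PosSemidef ∧ ρ.trace = 1

/-- A POVM: positive semidefinite elements summing to the identity. -/
def IsPOVM {ι n : Type*} [Fintype ι] [Fintype n] [DecidableEq n]
    (M : ι → Matrix n n ℂ) : Prop :=
  (∀ i, (M i).PosSemidef) ∧ ∑ i, M i = 1

/-- Observational entropy `S_M(ρ) = -∑ p_i log (p_i / V_i)`. -/
def obsEntropy {ι n : Type*} [Fintype ι] [Fintype n]
    (M : ι → Matrix n n ℂ) (ρ : Matrix n n ℂ) : ℝ :=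
  -∑ i, ((M i * ρ).trace.re * Real.log ((M i * ρ).trace.re / (M i).trace.re))

/-- The function `g(x) = -x log x + (1+x) log(1+x)`. -/
def gFun (x : ℝ) : ℝ := -(x * Real.log x) + (1 + x) * Real.log (1 + x)

/-- Trace norm of a square complex matrix. -/
def traceNorm {n : Type*} [Fintype n] [DecidableEq n] (X : Matrix n n ℂ) : ℝ :=
  (((Matrix.posSemidef_conjTranspose_mul_self X).1.eigenvectorUnitary : Matrix n n ℂ) *
    Matrix.diagonal (fun i => ((Real.sqrt ((Matrix.posSemidef_conjTranspose_mul_self X).1.eigenvalues i) : ℝ) : ℂ)) *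
    (star (Matrix.posSemidef_conjTranspose_mul_self X).1.eigenvectorUnitary : Matrix n n ℂ)).trace.re

/-- Matrix logarithm of a Hermitian matrix via the spectral decomposition,
with the convention `log 0 = 0` on the kernel; junk value `0` on non-Hermitian input. -/
def matLog {n : Type*} [Fintype n] [DecidableEq n] (A : Matrix n n ℂ) : Matrix n n ℂ :=
  if hA : A.IsHermitian then
    (hA.eigenvectorUnitary : Matrix n n ℂ) *
      Matrix.diagonal (fun i => (Real.log (hA.eigenvalues i) : ℂ)) *
      (star (hA.eigenvectorUnitary : Matrix n n ℂ))
  else 0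

/-- Von Neumann entropy `S(ρ) = -tr(ρ log ρ)`. -/
def vnEntropy {n : Type*} [Fintype n] [DecidableEq n] (ρ : Matrix n n ℂ) : ℝ :=
  -((ρ * matLog ρ).trace.re)

/-- Quantum relative entropy, as an extended real number: `tr(μ (log μ - log ν))` when
`supp μ ⊆ supp ν` (both Hermitian), and `+∞` otherwise. -/
def qRelEntropy {n : Type*} [Fintype n] [DecidableEq n] (μ ν : Matrix n n ℂ) : EReal :=
  if μ.IsHermitian ∧ ν.IsHermitian ∧
      LinearMap.range (Matrix.toLin' μ) ≤ LinearMap.range (Matrix.toLin' ν) then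
    (((μ * (matLog μ - matLog ν)).trace.re : ℝ) : EReal)
  else ⊤

/-- Real-valued quantum relative entropy `tr(μ (log μ - log ν))` (meaningful when
`supp μ ⊆ supp ν`). -/
def qRelEntropyR {n : Type*} [Fintype n] [DecidableEq n] (μ ν : Matrix n n ℂ) : ℝ :=
  (μ * (matLog μ - matLog ν)).trace.re


/-- The binary Shannon entropy `h(x) = -x log x - (1-x) log (1-x)`. -/
def hFun (x : ℝ) : ℝ := -(x * Real.log x) - (1 - x) * Real.log (1 - x)


section OEContHelpers
open Matrix
open scoped MatrixOrder

lemma jensen_log {ι : Type*} (t : Finset ι) (w y : ι → ℝ) (h0 : ∀ i ∈ t, 0 ≤ w i)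
    (h1 : ∑ i ∈ t, w i = 1) (hy : ∀ i ∈ t, 0 < y i) :
    ∑ i ∈ t, w i * Real.log (y i) ≤ Real.log (∑ i ∈ t, w i * y i) := by
  have := strictConcaveOn_log_Ioi.concaveOn.le_map_sum h0 h1 (fun i hi => hy i hi)
  simpa [smul_eq_mul] using this

lemma negMulLog_add_le {q a : ℝ} (hq : 0 ≤ q) (ha : 0 ≤ a) :
    Real.negMulLog (q + a) ≤ Real.negMulLog q + Real.negMulLog a := by
  rcases eq_or_lt_of_le hq with h | hq'
  · simp [← h]
  rcases eq_or_lt_of_le ha with h | ha'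
  · simp [← h]
  simp only [Real.negMulLog, neg_mul]
  have h1 : Real.log q ≤ Real.log (q + a) := Real.log_le_log hq' (by linarith)
  have h2 : Real.log a ≤ Real.log (q + a) := Real.log_le_log ha' (by linarith)
  nlinarith

lemma termA {p q V L : ℝ} (hq : 0 ≤ q) (hlt : q < p) (hV : 0 < V) (hL : |Real.log V| ≤ L) :
    q * Real.log (q / V) - p * Real.log (p / V)
      ≤ Real.negMulLog (p - q) + (p - q) * L := by
  have hlogV : Real.log V ≤ L := (abs_le.mp hL).2
  have hp : 0 < p := lt_of_le_of_lt hq hlt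
  have hlp : Real.log (p / V) = Real.log p - Real.log V := Real.log_div hp.ne' hV.ne'
  have key : q * Real.log q - p * Real.log p ≤ Real.negMulLog (p - q) := by
    have := negMulLog_add_le hq (le_of_lt (sub_pos.mpr hlt))
    rw [show q + (p - q) = p by ring] at this
    simp only [Real.negMulLog, neg_mul] at this ⊢
    linarith
  rcases eq_or_lt_of_le hq with h | hq'
  · simp only [← h, zero_mul, zero_sub, sub_zero] at *
    rw [hlp]
    have : (p - 0) * L = p * L := by ring
    simp only [Real.negMulLog, neg_mul] at key ⊢
    nlinarith
  · have hlq : Real.log (q / V) = Real.log q - Real.log V := Real.log_div hq'.ne' hV.ne'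
    rw [hlp, hlq]
    have : (p - q) * Real.log V ≤ (p - q) * L :=
      mul_le_mul_of_nonneg_left hlogV (by linarith)
    nlinarith

lemma termB {p q V : ℝ} (hp : 0 ≤ p) (hle : p ≤ q) (hqV : q ≤ V) (hV : 0 < V) :
    q * Real.log (q / V) - p * Real.log (p / V) ≤ p * Real.log (q / p) := by
  rcases eq_or_lt_of_le hp with h | hp'
  · simp only [← h, zero_mul, sub_zero]
    rcases eq_or_lt_of_le (h ▸ hle : (0:ℝ) ≤ q) with h2 | hq'
    · simp [← h2]
    · have : Real.log (q / V) ≤ 0 := by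
        apply Real.log_nonpos (by positivity)
        rw [div_le_one hV]; exact hqV
      nlinarith
  · have hq' : 0 < q := lt_of_lt_of_le hp' hle
    have h1 : Real.log (q / V) = Real.log q - Real.log V := Real.log_div hq'.ne' hV.ne'
    have h2 : Real.log (p / V) = Real.log p - Real.log V := Real.log_div hp'.ne' hV.ne'
    have h3 : Real.log (q / p) = Real.log q - Real.log p := Real.log_div hq'.ne' hp'.ne'
    have h4 : Real.log q ≤ Real.log V := Real.log_le_log hq' hqV
    rw [h1, h2, h3]
    nlinarith

lemma sumA {ι : Type*} {A : Finset ι} {a : ι → ℝ} (ha : ∀ i ∈ A, 0 < a i) {δ N : ℝ}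
    (hδ : ∑ i ∈ A, a i = δ) (hN : (A.card : ℝ) ≤ N) :
    ∑ i ∈ A, Real.negMulLog (a i) ≤ δ * Real.log N + Real.negMulLog δ := by
  rcases A.eq_empty_or_nonempty with rfl | hA
  · simp at hδ; simp [← hδ]
  have hδ0 : 0 < δ := hδ ▸ Finset.sum_pos ha hA
  have hcard0 : (0:ℝ) < (A.card : ℝ) := by exact_mod_cast hA.card_pos
  have hN0 : (0:ℝ) < N := lt_of_lt_of_le hcard0 hN
  have key : ∑ i ∈ A, (a i / δ) * Real.log (a i)⁻¹
      ≤ Real.log (∑ i ∈ A, (a i / δ) * (a i)⁻¹) := by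
    apply jensen_log
    · exact fun i hi => div_nonneg (ha i hi).le hδ0.le
    · rw [← Finset.sum_div, hδ, div_self hδ0.ne']
    · exact fun i hi => inv_pos.mpr (ha i hi)
  have hterm : ∀ i ∈ A, (a i / δ) * (a i)⁻¹ = δ⁻¹ := by
    intro i hi
    field_simp
    have := (ha i hi)
    exact div_self (by positivity)
  have hsum : ∑ i ∈ A, (a i / δ) * (a i)⁻¹ = (A.card : ℝ) / δ := by
    rw [Finset.sum_congr rfl hterm, Finset.sum_const, nsmul_eq_mul]
    ring
  have hexp : ∑ i ∈ A, Real.negMulLog (a i) = δ * ∑ i ∈ A, (a i / δ) * Real.log (a i)⁻¹ := by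
    rw [Finset.mul_sum]
    apply Finset.sum_congr rfl
    intro i hi
    rw [Real.log_inv, Real.negMulLog]
    field_simp
  rw [hexp]
  calc δ * ∑ i ∈ A, (a i / δ) * Real.log (a i)⁻¹
      ≤ δ * Real.log ((A.card : ℝ) / δ) := by
        rw [← hsum]; exact mul_le_mul_of_nonneg_left key hδ0.le
    _ ≤ δ * Real.log (N / δ) := by
        have h2 : (A.card:ℝ)/δ ≤ N/δ := by gcongr
        have h3 := Real.log_le_log (by positivity) h2
        exact mul_le_mul_of_nonneg_left h3 hδ0.le
    _ = δ * Real.log N + Real.negMulLog δ := by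
        rw [Real.log_div hN0.ne' hδ0.ne', Real.negMulLog]
        ring

lemma Plog {P δ : ℝ} (hP : 0 < P) (hδ : 0 ≤ δ) (h1 : P ≤ 1 - δ) :
    P * Real.log ((P + δ) / P) ≤ Real.negMulLog (1 - δ) := by
  have h1δ : 0 < 1 - δ := lt_of_lt_of_le hP h1
  have hb0 : 0 ≤ P / (1 - δ) := by positivity
  have hab : (1 - P / (1 - δ)) + P / (1 - δ) = 1 := by ring
  have ha0 : 0 ≤ 1 - P / (1 - δ) := by
    have : P / (1 - δ) ≤ 1 := (div_le_one h1δ).mpr h1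
    linarith
  have hx : (1:ℝ) ∈ Set.Ioi (0:ℝ) := by norm_num
  have hy : (P + δ) / P ∈ Set.Ioi (0:ℝ) := by
    simp only [Set.mem_Ioi]; positivity
  have hconc := strictConcaveOn_log_Ioi.concaveOn.2 hx hy ha0 hb0 hab
  simp only [smul_eq_mul, Real.log_one, mul_zero, zero_add, mul_one] at hconc
  have hcomb : 1 - P / (1 - δ) + P / (1 - δ) * ((P + δ) / P) = 1 / (1 - δ) := by
    field_simp
    ring
  rw [hcomb] at hconc
  have h5 := mul_le_mul_of_nonneg_left hconc h1δ.le
  calc P * Real.log ((P + δ) / P)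
      = (1 - δ) * (P / (1 - δ) * Real.log ((P + δ) / P)) := by field_simp
    _ ≤ (1 - δ) * Real.log (1 / (1 - δ)) := h5
    _ = Real.negMulLog (1 - δ) := by
        rw [one_div, Real.log_inv, Real.negMulLog]; ring

lemma sumB {ι : Type*} {B : Finset ι} {p q : ι → ℝ} (hp : ∀ i ∈ B, 0 ≤ p i)
    (hq : ∀ i ∈ B, 0 ≤ q i) (hpq : ∀ i ∈ B, p i ≤ q i)
    {δ P : ℝ} (hP : ∑ i ∈ B, p i = P) (hQ : ∑ i ∈ B, q i = P + δ) (hδ : 0 ≤ δ)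
    (hP1 : P ≤ 1 - δ) :
    ∑ i ∈ B, p i * Real.log (q i / p i) ≤ Real.negMulLog (1 - δ) := by
  have hP0 : 0 ≤ P := hP ▸ Finset.sum_nonneg hp
  classical
  set B' := B.filter (fun i => 0 < p i) with hB'
  have hsub : B' ⊆ B := Finset.filter_subset _ _
  have hzero : ∀ i ∈ B, i ∉ B' → p i = 0 := by
    intro i hi hni
    simp only [hB', Finset.mem_filter, hi, true_and, not_lt] at hni
    linarith [hp i hi]
  have hsum_eq : ∑ i ∈ B, p i * Real.log (q i / p i) = ∑ i ∈ B', p i * Real.log (q i / p i) := by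
    symm; apply Finset.sum_subset hsub
    intro i hi hni; rw [hzero i hi hni]; ring
  have hPsum : ∑ i ∈ B', p i = P := by
    rw [← hP]; apply Finset.sum_subset hsub
    intro i hi hni; exact hzero i hi hni
  rcases eq_or_lt_of_le hP0 with h0 | hPpos
  · have h1δ : 0 ≤ 1 - δ := le_trans hP0 hP1
    have hB'e : B' = ∅ := by
      apply Finset.eq_empty_of_forall_notMem
      intro i hi
      have hip : 0 < p i := (Finset.mem_filter.mp hi).2
      have hgt : 0 < ∑ j ∈ B', p j :=
        Finset.sum_pos' (fun j hj => (Finset.mem_filter.mp hj).2.le) ⟨i, hi, hip⟩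
      rw [hPsum, ← h0] at hgt; exact lt_irrefl 0 hgt
    rw [hsum_eq, hB'e]
    simp only [Finset.sum_empty]
    exact Real.negMulLog_nonneg h1δ (by linarith)
  · have key : ∑ i ∈ B', (p i / P) * Real.log (q i / p i)
        ≤ Real.log (∑ i ∈ B', (p i / P) * (q i / p i)) := by
      apply jensen_log
      · exact fun i hi => div_nonneg (hp i (hsub hi)) hPpos.le
      · rw [← Finset.sum_div, hPsum, div_self hPpos.ne']
      · intro i hi
        have hip : 0 < p i := (Finset.mem_filter.mp hi).2
        have hiq : 0 < q i := lt_of_lt_of_le hip (hpq i (hsub hi))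
        positivity
    have hterm : ∀ i ∈ B', (p i / P) * (q i / p i) = q i / P := by
      intro i hi
      have hip : p i ≠ 0 := (Finset.mem_filter.mp hi).2.ne'
      field_simp
    have hsum2 : ∑ i ∈ B', (p i / P) * (q i / p i) = (∑ i ∈ B', q i) / P := by
      rw [Finset.sum_congr rfl hterm, ← Finset.sum_div]
    have hQ' : ∑ i ∈ B', q i ≤ P + δ := by
      rw [← hQ]
      apply Finset.sum_le_sum_of_subset_of_nonneg hsub
      intro i hi _; exact hq i hi
    have hQ'0 : 0 < ∑ i ∈ B', q i := by
      calc (0:ℝ) < P := hPpos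
        _ = ∑ i ∈ B', p i := hPsum.symm
        _ ≤ ∑ i ∈ B', q i := Finset.sum_le_sum (fun i hi => hpq i (hsub hi))
    calc ∑ i ∈ B, p i * Real.log (q i / p i)
        = P * ∑ i ∈ B', (p i / P) * Real.log (q i / p i) := by
          rw [hsum_eq, Finset.mul_sum]
          apply Finset.sum_congr rfl
          intro i hi
          field_simp
      _ ≤ P * Real.log ((∑ i ∈ B', q i) / P) := by
          rw [← hsum2]; exact mul_le_mul_of_nonneg_left key hPpos.le
      _ ≤ P * Real.log ((P + δ) / P) := by
          have h2 : (∑ i ∈ B', q i)/P ≤ (P + δ)/P := by gcongr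
          have h3 := Real.log_le_log (by positivity) h2
          exact mul_le_mul_of_nonneg_left h3 hPpos.le
      _ ≤ Real.negMulLog (1 - δ) := Plog hPpos hδ hP1

lemma classical_core {ι : Type*} [Fintype ι] (p q V : ι → ℝ) (hV : ∀ i, 0 < V i)
    (hp0 : ∀ i, 0 ≤ p i) (hq0 : ∀ i, 0 ≤ q i) (hp1 : ∑ i, p i = 1) (hq1 : ∑ i, q i = 1)
    (hqV : ∀ i, q i ≤ V i) {L : ℝ} (hL : ∀ i, |Real.log (V i)| ≤ L) {δ : ℝ}
    (hδ : ∑ i, |p i - q i| = 2 * δ) :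
    (-∑ i, p i * Real.log (p i / V i)) - (-∑ i, q i * Real.log (q i / V i))
      ≤ Real.negMulLog δ + Real.negMulLog (1 - δ)
        + δ * Real.log (Fintype.card ι) + δ * L := by
  classical
  set A : Finset ι := Finset.univ.filter (fun i => q i < p i) with hA
  set B : Finset ι := Finset.univ.filter (fun i => ¬ q i < p i) with hB
  have hAB : ∀ (f : ι → ℝ), ∑ i, f i = ∑ i ∈ A, f i + ∑ i ∈ B, f i := by
    intro f
    rw [hA, hB, Finset.sum_filter_add_sum_filter_not]
  -- mass balance
  have hzero : ∑ i ∈ A, (p i - q i) + ∑ i ∈ B, (p i - q i) = 0 := by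
    rw [← hAB]
    rw [Finset.sum_sub_distrib, hp1, hq1, sub_self]
  have habs : ∑ i ∈ A, (p i - q i) + ∑ i ∈ B, (q i - p i) = 2 * δ := by
    rw [← hδ, hAB (fun i => |p i - q i|)]
    congr 1
    · apply Finset.sum_congr rfl
      intro i hi
      have : q i < p i := (Finset.mem_filter.mp hi).2
      rw [abs_of_pos (by linarith)]
    · apply Finset.sum_congr rfl
      intro i hi
      have : ¬ q i < p i := (Finset.mem_filter.mp hi).2
      rw [abs_of_nonpos (by linarith [not_lt.mp this]), neg_sub]
  have hδA : ∑ i ∈ A, (p i - q i) = δ := by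
    have h2 : ∑ i ∈ B, (q i - p i) = - ∑ i ∈ B, (p i - q i) := by
      rw [← Finset.sum_neg_distrib]
      apply Finset.sum_congr rfl; intro i _; ring
    rw [h2] at habs
    linarith [hzero, habs]
  have hδB : ∑ i ∈ B, (q i - p i) = δ := by linarith [habs, hδA]
  have hδ0 : 0 ≤ δ := by
    rw [← hδA]
    apply Finset.sum_nonneg
    intro i hi
    have : q i < p i := (Finset.mem_filter.mp hi).2
    linarith
  -- rewrite LHS
  have hLHS : (-∑ i, p i * Real.log (p i / V i)) - (-∑ i, q i * Real.log (q i / V i))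
      = ∑ i, (q i * Real.log (q i / V i) - p i * Real.log (p i / V i)) := by
    rw [Finset.sum_sub_distrib]; ring
  rw [hLHS, hAB (fun i => q i * Real.log (q i / V i) - p i * Real.log (p i / V i))]
  -- A part
  have hApart : ∑ i ∈ A, (q i * Real.log (q i / V i) - p i * Real.log (p i / V i))
      ≤ δ * Real.log (Fintype.card ι) + Real.negMulLog δ + δ * L := by
    calc ∑ i ∈ A, (q i * Real.log (q i / V i) - p i * Real.log (p i / V i))
        ≤ ∑ i ∈ A, (Real.negMulLog (p i - q i) + (p i - q i) * L) := by
          apply Finset.sum_le_sum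
          intro i hi
          exact termA (hq0 i) (Finset.mem_filter.mp hi).2 (hV i) (hL i)
      _ = ∑ i ∈ A, Real.negMulLog (p i - q i) + (∑ i ∈ A, (p i - q i)) * L := by
          rw [Finset.sum_add_distrib, Finset.sum_mul]
      _ ≤ (δ * Real.log (Fintype.card ι) + Real.negMulLog δ) + δ * L := by
          apply add_le_add
          · apply sumA
            · intro i hi
              have : q i < p i := (Finset.mem_filter.mp hi).2
              linarith
            · exact hδA
            · exact_mod_cast Finset.card_le_card (Finset.subset_univ A) |>.trans
                (le_of_eq (Finset.card_univ))
          · rw [hδA]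
      _ = δ * Real.log (Fintype.card ι) + Real.negMulLog δ + δ * L := by ring
  -- B part
  have hBpart : ∑ i ∈ B, (q i * Real.log (q i / V i) - p i * Real.log (p i / V i))
      ≤ Real.negMulLog (1 - δ) := by
    have step1 : ∑ i ∈ B, (q i * Real.log (q i / V i) - p i * Real.log (p i / V i))
        ≤ ∑ i ∈ B, p i * Real.log (q i / p i) := by
      apply Finset.sum_le_sum
      intro i hi
      have hle : p i ≤ q i := not_lt.mp (Finset.mem_filter.mp hi).2
      exact termB (hp0 i) hle (hqV i) (hV i)
    refine step1.trans ?_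
    have hPA : δ ≤ ∑ i ∈ A, p i := by
      rw [← hδA]
      apply Finset.sum_le_sum
      intro i hi
      linarith [hq0 i]
    have hPB : ∑ i ∈ B, p i = 1 - ∑ i ∈ A, p i := by
      have := hAB p
      rw [hp1] at this
      linarith
    apply sumB (fun i _ => hp0 i) (fun i _ => hq0 i)
      (fun i hi => not_lt.mp (Finset.mem_filter.mp hi).2) rfl ?_ hδ0 ?_
    · have : ∑ i ∈ B, q i - ∑ i ∈ B, p i = δ := by
        rw [← Finset.sum_sub_distrib]; exact hδB
      linarith
    · rw [hPB]; linarith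
  linarith [hApart, hBpart]

lemma S_nonneg {ι : Type*} [Fintype ι] (p V : ι → ℝ) (hV : ∀ i, 0 < V i)
    (hp0 : ∀ i, 0 ≤ p i) (hpV : ∀ i, p i ≤ V i) :
    0 ≤ -∑ i, p i * Real.log (p i / V i) := by
  rw [neg_nonneg]
  apply Finset.sum_nonpos
  intro i _
  rcases eq_or_lt_of_le (hp0 i) with h | h
  · simp [← h]
  · apply mul_nonpos_of_nonneg_of_nonpos h.le
    apply Real.log_nonpos (div_nonneg h.le (hV i).le)
    rw [div_le_one (hV i)]
    exact hpV i

lemma S_le {ι : Type*} [Fintype ι] [Nonempty ι] (p V : ι → ℝ) (hV : ∀ i, 0 < V i)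
    (hp0 : ∀ i, 0 ≤ p i) (hp1 : ∑ i, p i = 1) {L : ℝ} (hL : ∀ i, |Real.log (V i)| ≤ L) :
    -∑ i, p i * Real.log (p i / V i) ≤ Real.log (Fintype.card ι) + L := by
  classical
  set T : Finset ι := Finset.univ.filter (fun i => 0 < p i) with hT
  have hzero : ∀ i ∈ Finset.univ, i ∉ T → p i * Real.log (p i / V i) = 0 := by
    intro i _ hni
    simp only [hT, Finset.mem_filter, Finset.mem_univ, true_and, not_lt] at hni
    have : p i = 0 := le_antisymm hni (hp0 i)
    rw [this]; ring
  have hsum_eq : ∑ i, p i * Real.log (p i / V i) = ∑ i ∈ T, p i * Real.log (p i / V i) :=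
    (Finset.sum_subset (Finset.subset_univ T) hzero).symm
  have hT1 : ∑ i ∈ T, p i = 1 := by
    rw [← hp1]
    exact Finset.sum_subset (Finset.subset_univ T) (by
      intro i _ hni
      simp only [hT, Finset.mem_filter, Finset.mem_univ, true_and, not_lt] at hni
      exact le_antisymm hni (hp0 i))
  have hneg : -∑ i ∈ T, p i * Real.log (p i / V i) = ∑ i ∈ T, p i * Real.log (V i / p i) := by
    rw [← Finset.sum_neg_distrib]
    apply Finset.sum_congr rfl
    intro i hi
    have hip : 0 < p i := (Finset.mem_filter.mp hi).2
    rw [Real.log_div hip.ne' (hV i).ne', Real.log_div (hV i).ne' hip.ne']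
    ring
  rw [hsum_eq, hneg]
  have key : ∑ i ∈ T, p i * Real.log (V i / p i) ≤ Real.log (∑ i ∈ T, p i * (V i / p i)) := by
    apply jensen_log _ _ _ (fun i hi => (hp0 i)) hT1
    intro i hi
    have hip : 0 < p i := (Finset.mem_filter.mp hi).2
    exact div_pos (hV i) hip
  refine key.trans ?_
  have hsum2 : ∑ i ∈ T, p i * (V i / p i) = ∑ i ∈ T, V i := by
    apply Finset.sum_congr rfl
    intro i hi
    have hip : (0:ℝ) < p i := (Finset.mem_filter.mp hi).2
    field_simp
  rw [hsum2]
  have hVle : ∑ i ∈ T, V i ≤ (Fintype.card ι : ℝ) * Real.exp L := by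
    calc ∑ i ∈ T, V i ≤ ∑ i ∈ T, Real.exp L := by
          apply Finset.sum_le_sum
          intro i hi
          have h1 : Real.log (V i) ≤ L := (abs_le.mp (hL i)).2
          calc V i = Real.exp (Real.log (V i)) := (Real.exp_log (hV i)).symm
            _ ≤ Real.exp L := Real.exp_le_exp.mpr h1
      _ = (T.card : ℝ) * Real.exp L := by rw [Finset.sum_const, nsmul_eq_mul]
      _ ≤ (Fintype.card ι : ℝ) * Real.exp L := by
          apply mul_le_mul_of_nonneg_right _ (Real.exp_pos L).le
          exact_mod_cast Finset.card_le_card (Finset.subset_univ T) |>.trans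
            (le_of_eq Finset.card_univ)
  have hpos : (0:ℝ) < ∑ i ∈ T, V i := by
    have hTne : T.Nonempty := by
      by_contra h
      rw [Finset.not_nonempty_iff_eq_empty] at h
      rw [h, Finset.sum_empty] at hT1
      norm_num at hT1
    exact Finset.sum_pos (fun i hi => hV i) hTne
  calc Real.log (∑ i ∈ T, V i) ≤ Real.log ((Fintype.card ι : ℝ) * Real.exp L) :=
        Real.log_le_log hpos hVle
    _ = Real.log (Fintype.card ι) + L := by
        rw [Real.log_mul (by positivity) (Real.exp_pos L).ne', Real.log_exp]
  
lemma final_wrap {x C δ ε : ℝ} (hC : 0 ≤ C) (hδ0 : 0 ≤ δ) (hδε : δ ≤ ε) (hε1 : ε ≤ 1)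
    (h1 : x ≤ Real.negMulLog δ + Real.negMulLog (1 - δ) + δ * C) (h2 : x ≤ C) :
    x ≤ (Real.negMulLog ε + Real.negMulLog (1 - ε)) + ε * C := by
  by_cases hd1 : δ = 1
  · have hε : ε = 1 := le_antisymm hε1 (hd1 ▸ hδε)
    rw [hε]
    simpa using h2
  have hδlt : δ < 1 := lt_of_le_of_ne (le_trans hδε hε1) hd1
  set a := (1 - ε) / (1 - δ) with ha
  set b := (ε - δ) / (1 - δ) with hb
  have h1δ : 0 < 1 - δ := by linarith
  have ha0 : 0 ≤ a := by apply div_nonneg <;> linarith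
  have hb0 : 0 ≤ b := by apply div_nonneg <;> linarith
  have hab : a + b = 1 := by
    rw [ha, hb, ← add_div, div_eq_iff h1δ.ne']
    ring
  have hcomb : a * δ + b = ε := by
    rw [ha, hb, div_mul_eq_mul_div, ← add_div]
    rw [div_eq_iff h1δ.ne']
    ring
  have hcomb2 : a * (1 - δ) = 1 - ε := by
    rw [ha, div_mul_cancel₀ _ h1δ.ne']
  have c1 := Real.concaveOn_negMulLog.2 (Set.mem_Ici.mpr hδ0) (Set.mem_Ici.mpr zero_le_one)
    ha0 hb0 hab
  have c2 := Real.concaveOn_negMulLog.2 (Set.mem_Ici.mpr (by linarith : (0:ℝ) ≤ 1 - δ))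
    (Set.mem_Ici.mpr le_rfl) ha0 hb0 hab
  simp only [smul_eq_mul, Real.negMulLog_one, Real.negMulLog_zero, mul_zero, add_zero,
    mul_one, mul_zero] at c1 c2
  rw [hcomb] at c1
  rw [hcomb2] at c2
  have hεδ : ε * C = a * (δ * C) + b * C := by
    rw [← hcomb]; ring
  calc x = a * x + b * x := by rw [← add_mul, hab, one_mul]
    _ ≤ a * (Real.negMulLog δ + Real.negMulLog (1 - δ) + δ * C) + b * C := by
        apply add_le_add
        · exact mul_le_mul_of_nonneg_left h1 ha0
        · exact mul_le_mul_of_nonneg_left h2 hb0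
    _ = (a * Real.negMulLog δ + a * Real.negMulLog (1 - δ)) + (a * (δ * C) + b * C) := by ring
    _ ≤ (Real.negMulLog ε + Real.negMulLog (1 - ε)) + ε * C := by
        rw [hεδ]
        apply add_le_add_left
        exact add_le_add c1 c2

variable {n : Type*} [Fintype n] [DecidableEq n]

lemma psd_trace_re_nonneg {A : Matrix n n ℂ} (hA : A.PosSemidef) : 0 ≤ A.trace.re := by
  have h : ∀ i, 0 ≤ (A i i).re := by
    intro i
    have h2 := hA.dotProduct_mulVec_nonneg (Pi.single i 1)
    have h3 : (star (Pi.single i 1 : n → ℂ)) ⬝ᵥ (A *ᵥ (Pi.single i 1 : n → ℂ)) = A i i := by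
      simp [dotProduct, Matrix.mulVec_single, Pi.single_apply, apply_ite]
    rw [h3] at h2
    exact (Complex.le_def.mp h2).1
  rw [Matrix.trace, Complex.re_sum]
  exact Finset.sum_nonneg fun i _ => h i

lemma psd_mul_trace_re_nonneg {A B : Matrix n n ℂ} (hA : A.PosSemidef) (hB : B.PosSemidef) :
    0 ≤ (A * B).trace.re := by
  have hB' : 0 ≤ B := Matrix.nonneg_iff_posSemidef.mpr hB
  have h1 : A * B = (A * CFC.sqrt B) * CFC.sqrt B := by
    rw [mul_assoc, CFC.sqrt_mul_sqrt_self B hB']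
  have h2 : ((A * CFC.sqrt B) * CFC.sqrt B).trace = (CFC.sqrt B * A * CFC.sqrt B).trace := by
    rw [Matrix.trace_mul_comm, mul_assoc]
  have h3 : (CFC.sqrt B * A * CFC.sqrt B).PosSemidef := by
    have := hA.conjTranspose_mul_mul_same (CFC.sqrt B)
    rwa [(Matrix.nonneg_iff_posSemidef.mp (CFC.sqrt_nonneg B)).1] at this
  rw [h1, h2]
  exact psd_trace_re_nonneg h3

lemma psd_trace_re_eq_zero {A : Matrix n n ℂ} (hA : A.PosSemidef) (h : A.trace.re = 0) :
    A = 0 := by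
  apply hA.trace_eq_zero_iff.mp
  have h2 := Complex.le_def.mp hA.trace_nonneg
  apply Complex.ext
  · simpa using h
  · simpa using h2.2.symm

lemma one_sub_psd {ρ : Matrix n n ℂ} (hρ : IsState ρ) : (1 - ρ).PosSemidef := by
  have h := hρ.1.1
  have hU2 : (h.eigenvectorUnitary : Matrix n n ℂ) * star (h.eigenvectorUnitary : Matrix n n ℂ) = 1 :=
    (Matrix.mem_unitaryGroup_iff).mp h.eigenvectorUnitary.2
  have hU1 : star (h.eigenvectorUnitary : Matrix n n ℂ) * (h.eigenvectorUnitary : Matrix n n ℂ) = 1 :=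
    (Matrix.mem_unitaryGroup_iff').mp h.eigenvectorUnitary.2
  have htr : ∑ k, h.eigenvalues k = 1 := by
    have h1 : ρ.trace = ∑ k, (h.eigenvalues k : ℂ) := by
      conv_lhs => rw [h.spectral_theorem, Unitary.conjStarAlgAut_apply]
      rw [Matrix.trace_mul_cycle, hU1, one_mul, Matrix.trace_diagonal]
      rfl
    rw [hρ.2] at h1
    have h2 := congrArg Complex.re h1.symm
    rw [Complex.re_sum] at h2
    simpa using h2
  have hle : ∀ k, h.eigenvalues k ≤ 1 := by
    intro k
    rw [← htr]
    exact Finset.single_le_sum (fun j _ => hρ.1.eigenvalues_nonneg j) (Finset.mem_univ k)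
  have hdecomp : 1 - ρ
      = (h.eigenvectorUnitary : Matrix n n ℂ) * Matrix.diagonal (fun k => ((1 - h.eigenvalues k : ℝ) : ℂ)) * star (h.eigenvectorUnitary : Matrix n n ℂ) := by
    have hd : Matrix.diagonal (fun k => ((1 - h.eigenvalues k : ℝ) : ℂ))
        = 1 - Matrix.diagonal (RCLike.ofReal ∘ h.eigenvalues) := by
      rw [← Matrix.diagonal_one, Matrix.diagonal_sub]
      congr 1
      ext k
      simp [Function.comp]
    rw [hd, Matrix.mul_sub, Matrix.sub_mul, mul_one, hU2]
    conv_lhs => rw [h.spectral_theorem, Unitary.conjStarAlgAut_apply]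
  rw [hdecomp]
  have hdiag : (Matrix.diagonal (fun k => ((1 - h.eigenvalues k : ℝ) : ℂ))).PosSemidef := by
    apply Matrix.posSemidef_diagonal_iff.mpr
    intro k
    rw [Complex.zero_le_real]
    linarith [hle k]
  exact hdiag.mul_mul_conjTranspose_same (h.eigenvectorUnitary : Matrix n n ℂ)

lemma sum_abs_trace_le {ι : Type*} [Fintype ι] {M : ι → Matrix n n ℂ}
    (hM : IsPOVM M) {Δ : Matrix n n ℂ} (hΔ : Δ.IsHermitian) :
    ∑ i, |((M i * Δ).trace.re)| ≤ traceNorm Δ := by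
  have hU2 : (hΔ.eigenvectorUnitary : Matrix n n ℂ) * star (hΔ.eigenvectorUnitary : Matrix n n ℂ) = 1 :=
    (Matrix.mem_unitaryGroup_iff).mp hΔ.eigenvectorUnitary.2
  have hU1 : star (hΔ.eigenvectorUnitary : Matrix n n ℂ) * (hΔ.eigenvectorUnitary : Matrix n n ℂ) = 1 :=
    (Matrix.mem_unitaryGroup_iff').mp hΔ.eigenvectorUnitary.2
  set U : Matrix n n ℂ := (hΔ.eigenvectorUnitary : Matrix n n ℂ) with hUdef
  set lam := hΔ.eigenvalues with hlam
  set Pos : Matrix n n ℂ := U * Matrix.diagonal (fun k => ((max (lam k) 0 : ℝ) : ℂ)) * star U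
    with hPosdef
  set Neg : Matrix n n ℂ := U * Matrix.diagonal (fun k => ((max (-lam k) 0 : ℝ) : ℂ)) * star U
    with hNegdef
  have hPos : Pos.PosSemidef := by
    rw [hPosdef]
    have hdiag : (Matrix.diagonal (fun k => ((max (lam k) 0 : ℝ) : ℂ))).PosSemidef :=
      Matrix.posSemidef_diagonal_iff.mpr fun k =>
        Complex.zero_le_real.mpr (le_max_right _ _)
    exact hdiag.mul_mul_conjTranspose_same U
  have hNeg : Neg.PosSemidef := by
    rw [hNegdef]
    have hdiag : (Matrix.diagonal (fun k => ((max (-lam k) 0 : ℝ) : ℂ))).PosSemidef :=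
      Matrix.posSemidef_diagonal_iff.mpr fun k =>
        Complex.zero_le_real.mpr (le_max_right _ _)
    exact hdiag.mul_mul_conjTranspose_same U
  have hcol : ∀ Y : Matrix n n ℂ, star U * (U * Y) = Y := fun Y => by
    rw [← mul_assoc, hU1, one_mul]
  have hsub : Pos - Neg = Δ := by
    rw [hPosdef, hNegdef, ← Matrix.sub_mul, ← Matrix.mul_sub, Matrix.diagonal_sub]
    have hd : (fun i => (((max (lam i) 0 : ℝ)) : ℂ) - ((max (-lam i) 0 : ℝ) : ℂ))
        = RCLike.ofReal ∘ lam := by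
      funext k
      rw [← Complex.ofReal_sub, max_zero_sub_max_neg_zero_eq_self]
      rfl
    rw [hd]
    have h := hΔ.spectral_theorem
    rw [Unitary.conjStarAlgAut_apply] at h
    exact h.symm
  have habs : Pos + Neg = U * Matrix.diagonal (fun k => ((|lam k| : ℝ) : ℂ)) * star U := by
    rw [hPosdef, hNegdef, ← Matrix.add_mul, ← Matrix.mul_add, Matrix.diagonal_add]
    have hd : (fun i => (((max (lam i) 0 : ℝ)) : ℂ) + ((max (-lam i) 0 : ℝ) : ℂ))
        = fun k => ((|lam k| : ℝ) : ℂ) := by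
      funext k
      rw [← Complex.ofReal_add, max_zero_add_max_neg_zero_eq_abs_self]
    rw [hd]
  have hDelta : Δ = U * Matrix.diagonal (RCLike.ofReal ∘ lam) * star U := by
    have h := hΔ.spectral_theorem
    rw [Unitary.conjStarAlgAut_apply] at h
    exact h
  have hsq : (Pos + Neg) ^ 2 = Δᴴ * Δ := by
    have e1 : (Pos + Neg) ^ 2
        = U * (Matrix.diagonal (fun k => ((|lam k| : ℝ) : ℂ))
            * Matrix.diagonal (fun k => ((|lam k| : ℝ) : ℂ))) * star U := by
      rw [habs, pow_two]
      simp only [mul_assoc, hcol]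
    have e2 : Δ * Δ = U * (Matrix.diagonal (RCLike.ofReal ∘ lam)
        * Matrix.diagonal (RCLike.ofReal ∘ lam)) * star U := by
      conv_lhs => rw [hDelta]
      simp only [mul_assoc, hcol]
    have e3 : Matrix.diagonal (fun k => ((|lam k| : ℝ) : ℂ))
          * Matrix.diagonal (fun k => ((|lam k| : ℝ) : ℂ))
        = Matrix.diagonal (RCLike.ofReal ∘ lam) * Matrix.diagonal (RCLike.ofReal ∘ lam) := by
      have hfun : (fun i => ((|lam i| : ℝ) : ℂ) * ((|lam i| : ℝ) : ℂ))
          = (fun i => (RCLike.ofReal ∘ lam) i * (RCLike.ofReal ∘ lam) i) := by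
        funext k
        show ((|lam k| : ℝ) : ℂ) * ((|lam k| : ℝ) : ℂ) = ((lam k : ℝ) : ℂ) * ((lam k : ℝ) : ℂ)
        rw [← Complex.ofReal_mul, ← Complex.ofReal_mul, abs_mul_abs_self]
      rw [Matrix.diagonal_mul_diagonal, Matrix.diagonal_mul_diagonal, hfun]
    rw [hΔ.eq, e1, e2, e3]
  have htn : traceNorm Δ = ((Pos + Neg)).trace.re := by
    unfold traceNorm
    suffices key : ∀ hH : (Δᴴ * Δ).IsHermitian, ((hH.eigenvectorUnitary : Matrix n n ℂ) *
        Matrix.diagonal (fun i => ((Real.sqrt (hH.eigenvalues i) : ℝ) : ℂ)) *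
        star (hH.eigenvectorUnitary : Matrix n n ℂ)).trace.re = (Pos + Neg).trace.re from key _
    intro hH
    have hsp := hH.spectral_theorem
    rw [Unitary.conjStarAlgAut_apply] at hsp
    have hW1 : star (hH.eigenvectorUnitary : Matrix n n ℂ) * (hH.eigenvectorUnitary : Matrix n n ℂ) = 1 :=
      (Matrix.mem_unitaryGroup_iff').mp hH.eigenvectorUnitary.2
    have hev : ∀ i, 0 ≤ hH.eigenvalues i := fun i =>
      (Matrix.posSemidef_conjTranspose_mul_self Δ).eigenvalues_nonneg i
    generalize (hH.eigenvectorUnitary : Matrix n n ℂ) = W at hsp hW1 ⊢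
    generalize hH.eigenvalues = ev at hsp hev ⊢
    have hT0 : (W * Matrix.diagonal (fun i => ((Real.sqrt (ev i) : ℝ) : ℂ)) * star W).PosSemidef :=
      (Matrix.posSemidef_diagonal_iff.mpr fun k =>
        Complex.zero_le_real.mpr (Real.sqrt_nonneg _)).mul_mul_conjTranspose_same W
    have hTT : (W * Matrix.diagonal (fun i => ((Real.sqrt (ev i) : ℝ) : ℂ)) * star W)
        * (W * Matrix.diagonal (fun i => ((Real.sqrt (ev i) : ℝ) : ℂ)) * star W) = Δᴴ * Δ := by
      rw [hsp]
      have hd : Matrix.diagonal (fun i => ((Real.sqrt (ev i) : ℝ) : ℂ))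
          * Matrix.diagonal (fun i => ((Real.sqrt (ev i) : ℝ) : ℂ))
          = Matrix.diagonal (RCLike.ofReal ∘ ev) := by
        rw [Matrix.diagonal_mul_diagonal]
        congr 1
        funext k
        show ((Real.sqrt (ev k) : ℝ) : ℂ) * ((Real.sqrt (ev k) : ℝ) : ℂ) = ((ev k : ℝ) : ℂ)
        rw [← Complex.ofReal_mul, Real.mul_self_sqrt (hev k)]
      rw [← hd]
      simp only [mul_assoc]
      rw [← mul_assoc (star W) W, hW1, one_mul]
    have e1 := CFC.sqrt_unique hTT (Matrix.nonneg_iff_posSemidef.mpr hT0)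
    have e2 := CFC.sqrt_unique (a := Δᴴ * Δ) (b := Pos + Neg) (by rw [← pow_two]; exact hsq)
      (Matrix.nonneg_iff_posSemidef.mpr (hPos.add hNeg))
    exact congrArg (fun X : Matrix n n ℂ => X.trace.re) (e1.symm.trans e2)
  rw [htn]
  have hone : ∑ i, (M i * (Pos + Neg)).trace.re = (Pos + Neg).trace.re := by
    rw [← Complex.re_sum, ← Matrix.trace_sum, ← Finset.sum_mul, hM.2, one_mul]
  rw [← hone]
  apply Finset.sum_le_sum
  intro i _
  have hx : 0 ≤ (M i * Pos).trace.re := psd_mul_trace_re_nonneg (hM.1 i) hPos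
  have hy : 0 ≤ (M i * Neg).trace.re := psd_mul_trace_re_nonneg (hM.1 i) hNeg
  have hdiff : (M i * Δ).trace.re = (M i * Pos).trace.re - (M i * Neg).trace.re := by
    rw [← hsub, Matrix.mul_sub, Matrix.trace_sub, Complex.sub_re]
  have hsum : (M i * (Pos + Neg)).trace.re = (M i * Pos).trace.re + (M i * Neg).trace.re := by
    rw [Matrix.mul_add, Matrix.trace_add, Complex.add_re]
  rw [hdiff, hsum]
  rw [abs_le]
  constructor <;> linarith

lemma hFun_eq (x : ℝ) : hFun x = Real.negMulLog x + Real.negMulLog (1 - x) := by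
  unfold hFun Real.negMulLog
  ring

end OEContHelpers

theorem obsEntropy_naive_continuity {d : ℕ} {ι : Type*} [Fintype ι] [Nonempty ι]
    (M : ι → Matrix (Fin d) (Fin d) ℂ) (hM : IsPOVM M) (hM0 : ∀ i, M i ≠ 0)
    (ρ σ : Matrix (Fin d) (Fin d) ℂ) (hρ : IsState ρ) (hσ : IsState σ)
    (ε : ℝ) (hε1 : ε ≤ 1) (hε : (1/2) * traceNorm (ρ - σ) ≤ ε) :
    |obsEntropy M ρ - obsEntropy M σ| ≤ hFun ε + ε * Real.log (Fintype.card ι)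
      + ε * (Finset.univ.sup' Finset.univ_nonempty fun i => |Real.log ((M i).trace.re)|) := by
  classical
  set p : ι → ℝ := fun i => ((M i * ρ).trace).re with hpdef
  set q : ι → ℝ := fun i => ((M i * σ).trace).re with hqdef
  set V : ι → ℝ := fun i => ((M i).trace).re with hVdef
  set L : ℝ := Finset.univ.sup' Finset.univ_nonempty fun i => |Real.log ((M i).trace.re)|
    with hLdef
  have hV : ∀ i, 0 < V i := by
    intro i
    refine lt_of_le_of_ne (psd_trace_re_nonneg (hM.1 i)) ?_
    intro h0
    exact hM0 i (psd_trace_re_eq_zero (hM.1 i) h0.symm)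
  have hL : ∀ i, |Real.log (V i)| ≤ L := by
    intro i
    simp only [hVdef, hLdef]
    exact Finset.le_sup' (fun j => |Real.log ((M j).trace.re)|) (Finset.mem_univ i)
  have hL0 : 0 ≤ L := le_trans (abs_nonneg _) (hL (Classical.arbitrary ι))
  have hlogn : 0 ≤ Real.log (Fintype.card ι) := by
    apply Real.log_nonneg
    exact_mod_cast Fintype.card_pos
  have hp0 : ∀ i, 0 ≤ p i := fun i => psd_mul_trace_re_nonneg (hM.1 i) hρ.1
  have hq0 : ∀ i, 0 ≤ q i := fun i => psd_mul_trace_re_nonneg (hM.1 i) hσ.1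
  have hsum1 : ∀ (τ : Matrix (Fin d) (Fin d) ℂ), τ.trace = 1 →
      ∑ i, ((M i * τ).trace).re = 1 := by
    intro τ hτ
    have h1 : ∑ i, ((M i * τ).trace).re = ((∑ i, M i) * τ).trace.re := by
      rw [Finset.sum_mul, Matrix.trace_sum, Complex.re_sum]
    rw [h1, hM.2, one_mul, hτ, Complex.one_re]
  have hp1 : ∑ i, p i = 1 := hsum1 ρ hρ.2
  have hq1 : ∑ i, q i = 1 := hsum1 σ hσ.2
  have hsub : ∀ (τ : Matrix (Fin d) (Fin d) ℂ), IsState τ → ∀ i, ((M i * τ).trace).re ≤ V i := by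
    intro τ hτ i
    have h1 := psd_mul_trace_re_nonneg (hM.1 i) (one_sub_psd hτ)
    rw [Matrix.mul_sub, mul_one, Matrix.trace_sub, Complex.sub_re] at h1
    simp only [hVdef]
    linarith
  have hpV : ∀ i, p i ≤ V i := hsub ρ hρ
  have hqV : ∀ i, q i ≤ V i := hsub σ hσ
  set δ : ℝ := (∑ i, |p i - q i|) / 2 with hδdef
  have hδsum : ∑ i, |p i - q i| = 2 * δ := by rw [hδdef]; ring
  have hδ0 : 0 ≤ δ := by
    rw [hδdef]
    apply div_nonneg _ (by norm_num)
    exact Finset.sum_nonneg fun i _ => abs_nonneg _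
  have hδε : δ ≤ ε := by
    have h1 : ∑ i, |p i - q i| ≤ traceNorm (ρ - σ) := by
      have h2 := sum_abs_trace_le hM (hρ.1.1.sub hσ.1.1)
      have h3 : ∀ i, p i - q i = ((M i * (ρ - σ)).trace).re := by
        intro i
        simp only [hpdef, hqdef]
        rw [Matrix.mul_sub, Matrix.trace_sub, Complex.sub_re]
      calc ∑ i, |p i - q i| = ∑ i, |((M i * (ρ - σ)).trace).re| := by
            apply Finset.sum_congr rfl
            intro i _
            rw [h3 i]
        _ ≤ traceNorm (ρ - σ) := h2
    rw [hδdef]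
    linarith
  -- entropies
  have hSρ : obsEntropy M ρ = -∑ i, p i * Real.log (p i / V i) := by
    simp only [obsEntropy, hpdef, hVdef]
  have hSσ : obsEntropy M σ = -∑ i, q i * Real.log (q i / V i) := by
    simp only [obsEntropy, hqdef, hVdef]
  set C : ℝ := Real.log (Fintype.card ι) + L with hCdef
  have hC0 : 0 ≤ C := add_nonneg hlogn hL0
  have hcore1 : obsEntropy M ρ - obsEntropy M σ
      ≤ Real.negMulLog δ + Real.negMulLog (1 - δ) + δ * C := by
    have := classical_core p q V hV hp0 hq0 hp1 hq1 hqV hL hδsum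
    rw [hSρ, hSσ]
    have hm : δ * C = δ * Real.log (Fintype.card ι) + δ * L := by rw [hCdef]; ring
    linarith
  have hcore2 : obsEntropy M σ - obsEntropy M ρ
      ≤ Real.negMulLog δ + Real.negMulLog (1 - δ) + δ * C := by
    have hδsum' : ∑ i, |q i - p i| = 2 * δ := by
      rw [← hδsum]
      exact Finset.sum_congr rfl fun i _ => abs_sub_comm _ _
    have := classical_core q p V hV hq0 hp0 hq1 hp1 hpV hL hδsum'
    rw [hSρ, hSσ]
    have hm : δ * C = δ * Real.log (Fintype.card ι) + δ * L := by rw [hCdef]; ring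
    linarith
  have hub : ∀ (τ : Matrix (Fin d) (Fin d) ℂ), IsState τ → obsEntropy M τ ≤ C := by
    intro τ hτ
    have h1 := S_le (fun i => ((M i * τ).trace).re) V hV
      (fun i => psd_mul_trace_re_nonneg (hM.1 i) hτ.1) (hsum1 τ hτ.2) hL
    exact h1
  have hlb : ∀ (τ : Matrix (Fin d) (Fin d) ℂ), IsState τ → 0 ≤ obsEntropy M τ := by
    intro τ hτ
    exact S_nonneg (fun i => ((M i * τ).trace).re) V hV
      (fun i => psd_mul_trace_re_nonneg (hM.1 i) hτ.1) (hsub τ hτ)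
  have hb1 : obsEntropy M ρ - obsEntropy M σ ≤ C := by
    have := hub ρ hρ; have := hlb σ hσ; linarith
  have hb2 : obsEntropy M σ - obsEntropy M ρ ≤ C := by
    have := hub σ hσ; have := hlb ρ hρ; linarith
  have hw1 := final_wrap hC0 hδ0 hδε hε1 hcore1 hb1
  have hw2 := final_wrap hC0 hδ0 hδε hε1 hcore2 hb2
  have hfin : (Real.negMulLog ε + Real.negMulLog (1 - ε)) + ε * C
      = hFun ε + ε * Real.log (Fintype.card ι) + ε * L := by
    rw [hFun_eq, hCdef]; ring
  rw [hfin] at hw1 hw2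
  exact abs_sub_le_iff.mpr ⟨hw1, hw2⟩
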